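/- If (G,f) is a P-filtered graph and e is a deletable edge, then H₀(G,f) ≅ H₀(G∖e, f) and H₁(G,f) ≅ H₁(G∖e, f) ⊕ P_{f(e)} as persistence modules, where P_{f(e)} is the indicator projective at grade f(e). -/

import Mathlib

structure Grph where
  V : Type
  E : Type
  [fintV : Fintype V]
  [fintE : Fintype E]
  [decV : DecidableEq V]
  [decE : DecidableEq E]
  bnd : E → V × V

attribute [instance] Grph.fintV Grph.fintE Grph.decV Grph.decE

/-- boundary map k⟨E⟩ → k⟨V⟩, e ↦ e₁ - e₀ -/
noncomputable def Grph.d (G : Grph) (k : Type) [Field k] :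
    (G.E →₀ k) →ₗ[k] (G.V →₀ k) :=
  Finsupp.linearCombination k fun e =>
    Finsupp.single (G.bnd e).2 1 - Finsupp.single (G.bnd e).1 1

def Grph.adj (G : Grph) (v w : G.V) : Prop :=
  ∃ e, G.bnd e = (v, w) ∨ G.bnd e = (w, v)

structure FGrph (P : Type) [PartialOrder P] extends Grph where
  fV : V → P
  fE : E → P
  mono0 : ∀ e, fV (bnd e).1 ≤ fE e
  mono1 : ∀ e, fV (bnd e).2 ≤ fE e

variable {P : Type} [PartialOrder P]

/-- boundary map of the sublevel graph at grade r -/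
noncomputable def FGrph.dr (G : FGrph P) (k : Type) [Field k] (r : P) :
    ({e : G.E // G.fE e ≤ r} →₀ k) →ₗ[k] ({v : G.V // G.fV v ≤ r} →₀ k) :=
  Finsupp.linearCombination k fun e =>
    Finsupp.single ⟨(G.bnd e.1).2, le_trans (G.mono1 e.1) e.2⟩ 1 -
    Finsupp.single ⟨(G.bnd e.1).1, le_trans (G.mono0 e.1) e.2⟩ 1

noncomputable def FGrph.vmap (G : FGrph P) (k : Type) [Field k] {r s : P} (h : r ≤ s) :
    ({v : G.V // G.fV v ≤ r} →₀ k) →ₗ[k] ({v : G.V // G.fV v ≤ s} →₀ k) :=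
  Finsupp.lmapDomain k k fun v => ⟨v.1, le_trans v.2 h⟩

noncomputable def FGrph.emap (G : FGrph P) (k : Type) [Field k] {r s : P} (h : r ≤ s) :
    ({e : G.E // G.fE e ≤ r} →₀ k) →ₗ[k] ({e : G.E // G.fE e ≤ s} →₀ k) :=
  Finsupp.lmapDomain k k fun e => ⟨e.1, le_trans e.2 h⟩

lemma FGrph.dNat (G : FGrph P) (k : Type) [Field k] {r s : P} (h : r ≤ s) :
    (G.dr k s).comp (G.emap k h) = (G.vmap k h).comp (G.dr k r) := by
  apply Finsupp.lhom_ext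
  intro e a
  show (G.dr k s) ((G.emap k h) (Finsupp.single e a)) =
    (G.vmap k h) ((G.dr k r) (Finsupp.single e a))
  rw [FGrph.emap, Finsupp.lmapDomain_apply, Finsupp.mapDomain_single, FGrph.dr,
    Finsupp.linearCombination_single, FGrph.dr, Finsupp.linearCombination_single,
    map_smul, map_sub, FGrph.vmap, Finsupp.lmapDomain_apply, Finsupp.lmapDomain_apply,
    Finsupp.mapDomain_single, Finsupp.mapDomain_single]

/-- 0-dim homology of the sublevel graph at r -/
noncomputable abbrev FGrph.H0at (G : FGrph P) (k : Type) [Field k] (r : P) :=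
  ({v : G.V // G.fV v ≤ r} →₀ k) ⧸ LinearMap.range (G.dr k r)

noncomputable def FGrph.H0map (G : FGrph P) (k : Type) [Field k] {r s : P} (h : r ≤ s) :
    G.H0at k r →ₗ[k] G.H0at k s :=
  Submodule.mapQ _ _ (G.vmap k h) (by
    rintro x ⟨y, rfl⟩
    exact ⟨G.emap k h y, by
      have := LinearMap.congr_fun (G.dNat k h) y
      simpa using this⟩)

noncomputable abbrev FGrph.H1at (G : FGrph P) (k : Type) [Field k] (r : P) :=
  LinearMap.ker (G.dr k r)

noncomputable def FGrph.H1map (G : FGrph P) (k : Type) [Field k] {r s : P} (h : r ≤ s) :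
    G.H1at k r →ₗ[k] G.H1at k s :=
  (G.emap k h).restrict (p := LinearMap.ker (G.dr k r)) (q := LinearMap.ker (G.dr k s))
    (by
      intro x hx
      have := LinearMap.congr_fun (G.dNat k h) x
      simp only [LinearMap.mem_ker] at hx ⊢
      simp only [LinearMap.coe_comp, Function.comp_apply] at this
      rw [this, hx, map_zero])

def FGrph.adjAt (G : FGrph P) (r : P) (a b : G.V) : Prop :=
  ∃ e, G.fE e ≤ r ∧ (G.bnd e = (a, b) ∨ G.bnd e = (b, a))

def FGrph.connAt (G : FGrph P) (r : P) : G.V → G.V → Prop :=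
  Relation.ReflTransGen (G.adjAt r)

def FGrph.pi0At (G : FGrph P) (r : P) :=
  Quot (fun a b : {v : G.V // G.fV v ≤ r} => G.adjAt r a.1 b.1)

def FGrph.Collapsible (G : FGrph P) (e : G.E) : Prop :=
  (G.bnd e).1 ≠ (G.bnd e).2 ∧
    (G.fE e = G.fV (G.bnd e).1 ∨ G.fE e = G.fV (G.bnd e).2)

def FGrph.delete (G : FGrph P) (e : G.E) : FGrph P where
  V := G.V
  E := {d : G.E // d ≠ e}
  bnd d := G.bnd d.1
  fV := G.fV
  fE d := G.fE d.1
  mono0 d := G.mono0 d.1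
  mono1 d := G.mono1 d.1

def FGrph.Deletable (G : FGrph P) (e : G.E) : Prop :=
  (G.delete e).connAt (G.fE e) (G.bnd e).1 (G.bnd e).2

def FGrph.collapse (G : FGrph P) (e : G.E) (x y : G.V) (hxy : y ≠ x)
    (hf : G.fV y ≤ G.fV x) : FGrph P where
  V := {v : G.V // v ≠ x}
  E := {d : G.E // d ≠ e}
  bnd d :=
    (if h : (G.bnd d.1).1 = x then ⟨y, hxy⟩ else ⟨(G.bnd d.1).1, h⟩,
     if h : (G.bnd d.1).2 = x then ⟨y, hxy⟩ else ⟨(G.bnd d.1).2, h⟩)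
  fV v := G.fV v.1
  fE d := G.fE d.1
  mono0 d := by
    dsimp only
    split
    · exact le_trans hf (by rw [← ‹(G.bnd d.1).1 = x›]; exact G.mono0 d.1)
    · exact G.mono0 d.1
  mono1 d := by
    dsimp only
    split
    · exact le_trans hf (by rw [← ‹(G.bnd d.1).2 = x›]; exact G.mono1 d.1)
    · exact G.mono1 d.1


/-- The indicator projective `P_{f(e)}` evaluated at `r`: it is (free on) a one-element
type when `f(e) ≤ r`, and the zero vector space otherwise. -/
noncomputable abbrev indAt (k : Type) [Field k] (G : FGrph P) (e : G.E) (r : P) :=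
  PLift (G.fE e ≤ r) →₀ k

noncomputable def indMap (k : Type) [Field k] (G : FGrph P) (e : G.E) {r s : P}
    (h : r ≤ s) : indAt k G e r →ₗ[k] indAt k G e s :=
  Finsupp.lmapDomain k k fun p => ⟨le_trans p.down h⟩

/-! ### auxiliary development -/

namespace FGrph

section Aux
variable (k : Type) [Field k] (G : FGrph P) (e : G.E)

lemma conn_mem_range (H : FGrph P) (r : P) {a b : H.V}
    (h : H.connAt r a b) (ha : H.fV a ≤ r) :
    ∀ (hb : H.fV b ≤ r),
      (Finsupp.single ⟨b, hb⟩ 1 - Finsupp.single ⟨a, ha⟩ 1 :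
        {v : H.V // H.fV v ≤ r} →₀ k) ∈ LinearMap.range (H.dr k r) := by
  induction h with
  | refl =>
      intro hb
      have : (⟨a, hb⟩ : {v : H.V // H.fV v ≤ r}) = ⟨a, ha⟩ := rfl
      rw [this, sub_self]
      exact zero_mem _
  | @tail b' c hconn hadj ih =>
      intro hb
      obtain ⟨d, hd, hcase⟩ := hadj
      have hb' : H.fV b' ≤ r := by
        rcases hcase with h1 | h1
        · have := H.mono0 d; rw [h1] at this; exact le_trans this hd
        · have := H.mono1 d; rw [h1] at this; exact le_trans this hd
      have h2 : (Finsupp.single ⟨c, hb⟩ 1 - Finsupp.single ⟨b', hb'⟩ 1 :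
          {v : H.V // H.fV v ≤ r} →₀ k) ∈ LinearMap.range (H.dr k r) := by
        rcases hcase with h1 | h1
        · refine ⟨Finsupp.single ⟨d, hd⟩ 1, ?_⟩
          rw [FGrph.dr, Finsupp.linearCombination_single, one_smul]
          simp only [h1]
        · refine ⟨Finsupp.single ⟨d, hd⟩ (-1), ?_⟩
          rw [FGrph.dr, Finsupp.linearCombination_single, neg_one_smul, neg_sub]
          simp only [h1]
      have := add_mem h2 (ih hb')
      rwa [sub_add_sub_cancel] at this

/-- inclusion of sublevel edges of `G∖e` into sublevel edges of `G` -/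
def inclE (r : P) : {d : (G.delete e).E // (G.delete e).fE d ≤ r} →
    {d : G.E // G.fE d ≤ r} := fun d => ⟨d.1.1, d.2⟩

lemma inclE_inj (r : P) : Function.Injective (G.inclE e r) := by
  rintro ⟨⟨d, hd⟩, h1⟩ ⟨⟨d', hd'⟩, h1'⟩ h
  have : d = d' := congrArg Subtype.val h
  subst this; rfl

/-- inclusion of the indicator index into sublevel edges of `G` -/
def incle (r : P) : PLift (G.fE e ≤ r) → {d : G.E // G.fE d ≤ r} :=
  fun p => ⟨e, p.down⟩

lemma incle_inj (r : P) : Function.Injective (G.incle e r) :=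
  fun a b _ => Subsingleton.elim a b

noncomputable def piE (r : P) :
    ({d : G.E // G.fE d ≤ r} →₀ k) →ₗ[k]
      ({d : (G.delete e).E // (G.delete e).fE d ≤ r} →₀ k) :=
  Finsupp.lcomapDomain (R := k) (M := k) (G.inclE e r) (G.inclE_inj e r)

noncomputable def iotaE (r : P) :
    ({d : (G.delete e).E // (G.delete e).fE d ≤ r} →₀ k) →ₗ[k]
      ({d : G.E // G.fE d ≤ r} →₀ k) :=
  Finsupp.lmapDomain k k (G.inclE e r)

noncomputable def sigmaE (r : P) :
    (indAt k G e r) →ₗ[k] ({d : G.E // G.fE d ≤ r} →₀ k) :=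
  Finsupp.lmapDomain k k (G.incle e r)

noncomputable def jE (r : P) :
    ({d : G.E // G.fE d ≤ r} →₀ k) →ₗ[k] indAt k G e r :=
  Finsupp.lcomapDomain (R := k) (M := k) (G.incle e r) (G.incle_inj e r)

lemma piE_apply (r : P) (x) (d) : G.piE k e r x d = x (G.inclE e r d) := rfl

lemma jE_apply (r : P) (x) (p) : G.jE k e r x p = x (G.incle e r p) := rfl

lemma pi_iota (r : P) (y) : G.piE k e r (G.iotaE k e r y) = y := by
  ext d
  rw [piE_apply, iotaE, Finsupp.lmapDomain_apply, Finsupp.mapDomain_apply (G.inclE_inj e r)]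

lemma pi_sigma (r : P) (u) : G.piE k e r (G.sigmaE k e r u) = 0 := by
  ext d
  rw [piE_apply, sigmaE, Finsupp.lmapDomain_apply, Finsupp.mapDomain_notin_range]
  · rfl
  · rintro ⟨p, hp⟩
    exact d.1.2 (congrArg Subtype.val hp).symm

lemma j_iota (r : P) (y) : G.jE k e r (G.iotaE k e r y) = 0 := by
  ext p
  rw [jE_apply, iotaE, Finsupp.lmapDomain_apply, Finsupp.mapDomain_notin_range]
  · rfl
  · rintro ⟨d, hd⟩
    exact d.1.2 (congrArg Subtype.val hd)

lemma j_sigma (r : P) (u) : G.jE k e r (G.sigmaE k e r u) = u := by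
  ext p
  rw [jE_apply, sigmaE, Finsupp.lmapDomain_apply, Finsupp.mapDomain_apply (G.incle_inj e r)]

lemma decompE (r : P) (x) :
    G.iotaE k e r (G.piE k e r x) + G.sigmaE k e r (G.jE k e r x) = x := by
  ext d
  rw [Finsupp.add_apply]
  by_cases h : d.1 = e
  · have h1 : d = G.incle e r ⟨h ▸ d.2⟩ := Subtype.ext h
    rw [iotaE, Finsupp.lmapDomain_apply, Finsupp.mapDomain_notin_range, h1, sigmaE,
      Finsupp.lmapDomain_apply, Finsupp.mapDomain_apply (G.incle_inj e r), jE_apply, zero_add]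
    rintro ⟨d', hd'⟩
    exact d'.1.2 ((congrArg Subtype.val hd').trans h)
  · have h1 : d = G.inclE e r ⟨⟨d.1, h⟩, d.2⟩ := rfl
    rw [h1, iotaE, Finsupp.lmapDomain_apply, Finsupp.mapDomain_apply (G.inclE_inj e r),
      piE_apply, sigmaE, Finsupp.lmapDomain_apply, Finsupp.mapDomain_notin_range, add_zero]
    rintro ⟨p, hp⟩
    exact h ((congrArg Subtype.val hp).symm)

lemma d_iota (r : P) (y) :
    G.dr k r (G.iotaE k e r y) = (G.delete e).dr k r y := by
  induction y using Finsupp.induction_linear with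
  | zero => simp; rfl
  | add a b ha hb => simp [ha, hb]; rfl
  | single d a =>
      rw [iotaE, Finsupp.lmapDomain_apply, Finsupp.mapDomain_single, FGrph.dr,
        Finsupp.linearCombination_single, FGrph.dr, Finsupp.linearCombination_single]
      rfl

lemma emap_emap (H : FGrph P) {r s t : P} (h1 : r ≤ s) (h2 : s ≤ t) (x) :
    H.emap k h2 (H.emap k h1 x) = H.emap k (le_trans h1 h2) x := by
  simp only [FGrph.emap, Finsupp.lmapDomain_apply, ← Finsupp.mapDomain_comp]
  rfl

section cyc
variable (c : {d : (G.delete e).E // (G.delete e).fE d ≤ G.fE e} →₀ k)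

noncomputable def gamE (r : P) :
    indAt k G e r →ₗ[k] ({d : (G.delete e).E // (G.delete e).fE d ≤ r} →₀ k) :=
  Finsupp.linearCombination k fun p => (G.delete e).emap k p.down c

variable (hc : (G.delete e).dr k (G.fE e) c =
    Finsupp.single ⟨(G.bnd e).2, G.mono1 e⟩ 1 - Finsupp.single ⟨(G.bnd e).1, G.mono0 e⟩ 1)

include hc

lemma d_sigma (r : P) (u) :
    G.dr k r (G.sigmaE k e r u) = (G.delete e).dr k r (G.gamE k e c r u) := by
  induction u using Finsupp.induction_linear with
  | zero => simp; rfl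
  | add a b ha hb => simp [ha, hb]; rfl
  | single p a =>
      rw [sigmaE, Finsupp.lmapDomain_apply, Finsupp.mapDomain_single, gamE,
        Finsupp.linearCombination_single, map_smul]
      have h1 := LinearMap.congr_fun ((G.delete e).dNat k p.down) c
      simp only [LinearMap.coe_comp, Function.comp_apply] at h1
      rw [h1, hc, FGrph.dr, Finsupp.linearCombination_single, map_sub, FGrph.vmap,
        Finsupp.lmapDomain_apply, Finsupp.lmapDomain_apply, Finsupp.mapDomain_single,
        Finsupp.mapDomain_single]
      rfl

lemma d_fwd (r : P) (x) :
    (G.delete e).dr k r (G.piE k e r x + G.gamE k e c r (G.jE k e r x)) = G.dr k r x := by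
  rw [map_add]
  exact Eq.trans (b := G.dr k r (G.iotaE k e r (G.piE k e r x)) + G.dr k r (G.sigmaE k e r (G.jE k e r x)))
      (by rw [G.d_iota k e r, G.d_sigma k e c hc r]; rfl)
    (Eq.trans (b := G.dr k r (G.iotaE k e r (G.piE k e r x) + G.sigmaE k e r (G.jE k e r x)))
      (map_add _ _ _).symm
      (by rw [G.decompE k e r x]))

lemma rangeEq (r : P) :
    LinearMap.range (G.dr k r) = LinearMap.range ((G.delete e).dr k r) := by
  apply le_antisymm
  · rintro _ ⟨x, rfl⟩
    exact ⟨_, G.d_fwd k e c hc r x⟩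
  · rintro _ ⟨y, rfl⟩
    exact ⟨G.iotaE k e r y, G.d_iota k e r y⟩

end cyc

lemma esub_inj (H : FGrph P) {r s : P} (h : r ≤ s) :
    Function.Injective (fun d : {d : H.E // H.fE d ≤ r} =>
      (⟨d.1, le_trans d.2 h⟩ : {d : H.E // H.fE d ≤ s})) :=
  fun a b hab => Subtype.ext (congrArg (fun z : {d : H.E // H.fE d ≤ s} => z.1) hab)

lemma plift_inj {r s : P} (h : r ≤ s) :
    Function.Injective (fun q : PLift (G.fE e ≤ r) =>
      (⟨le_trans q.down h⟩ : PLift (G.fE e ≤ s))) :=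
  fun a b _ => Subsingleton.elim a b

lemma nat_j {r s : P} (h : r ≤ s) (x) :
    G.jE k e s (G.emap k h x) = indMap k G e h (G.jE k e r x) := by
  ext p
  by_cases hre : G.fE e ≤ r
  · have h1 : G.incle e s p = (fun d : {d : G.E // G.fE d ≤ r} => (⟨d.1, le_trans d.2 h⟩ :
        {d : G.E // G.fE d ≤ s})) (G.incle e r ⟨hre⟩) := rfl
    have h2 : p = (fun q : PLift (G.fE e ≤ r) => (⟨le_trans q.down h⟩ : PLift (G.fE e ≤ s)))
        ⟨hre⟩ := Subsingleton.elim _ _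
    rw [jE_apply, FGrph.emap, Finsupp.lmapDomain_apply, h1,
      Finsupp.mapDomain_apply (G.esub_inj h), h2, indMap, Finsupp.lmapDomain_apply,
      Finsupp.mapDomain_apply (G.plift_inj e h), jE_apply]
  · have h0 : G.jE k e r x = 0 := Finsupp.ext fun q => absurd q.down hre
    rw [h0, map_zero, jE_apply, FGrph.emap, Finsupp.lmapDomain_apply,
      Finsupp.mapDomain_notin_range]
    · rfl
    · rintro ⟨d, hd⟩
      have hd2 : d.1 = e := congrArg Subtype.val hd
      exact hre (hd2 ▸ d.2)

lemma nat_pi {r s : P} (h : r ≤ s) (x) :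
    G.piE k e s (G.emap k h x) = (G.delete e).emap k h (G.piE k e r x) := by
  ext d
  by_cases hd : G.fE d.1.1 ≤ r
  · have h1 : G.inclE e s d = (fun d' : {d : G.E // G.fE d ≤ r} => (⟨d'.1, le_trans d'.2 h⟩ :
        {d : G.E // G.fE d ≤ s})) (G.inclE e r ⟨⟨d.1.1, d.1.2⟩, hd⟩) := rfl
    have h2 : d = (fun d' : {d : (G.delete e).E // (G.delete e).fE d ≤ r} =>
        (⟨d'.1, le_trans d'.2 h⟩ : {d : (G.delete e).E // (G.delete e).fE d ≤ s}))
        ⟨⟨d.1.1, d.1.2⟩, hd⟩ := rfl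
    rw [piE_apply, FGrph.emap, Finsupp.lmapDomain_apply, h1,
      Finsupp.mapDomain_apply (G.esub_inj h), FGrph.emap, Finsupp.lmapDomain_apply]
    exact (Finsupp.mapDomain_apply ((G.delete e).esub_inj h) (G.piE k e r x) ⟨⟨d.1.1, d.1.2⟩, hd⟩).symm
  · rw [piE_apply, FGrph.emap, Finsupp.lmapDomain_apply, Finsupp.mapDomain_notin_range,
      FGrph.emap, Finsupp.lmapDomain_apply, Finsupp.mapDomain_notin_range]
    · rintro ⟨d', hd'⟩
      have hd2 : d'.1 = d.1 := congrArg Subtype.val hd'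
      exact hd (hd2 ▸ d'.2)
    · rintro ⟨d', hd'⟩
      have hd2 : d'.1 = d.1.1 := congrArg Subtype.val hd'
      exact hd (hd2 ▸ d'.2)

lemma nat_gam (c : {d : (G.delete e).E // (G.delete e).fE d ≤ G.fE e} →₀ k)
    {r s : P} (h : r ≤ s) (u) :
    G.gamE k e c s (indMap k G e h u) = (G.delete e).emap k h (G.gamE k e c r u) := by
  induction u using Finsupp.induction_linear with
  | zero => simp
  | add a b ha hb => simp [ha, hb]
  | single p a =>
      rw [indMap, Finsupp.lmapDomain_apply, Finsupp.mapDomain_single, gamE,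
        Finsupp.linearCombination_single, gamE, Finsupp.linearCombination_single,
        map_smul, emap_emap]

end Aux
end FGrph

/-- if `e` is a deletable edge, then `H₀(G,f) ≅ H₀(G∖e,f)` and
`H₁(G,f) ≅ H₁(G∖e,f) ⊕ P_{f(e)}` as persistence modules. -/
theorem homology_of_delete_deletable (k : Type) [Field k] (G : FGrph P) (e : G.E)
    (he : G.Deletable e) :
    (∃ ε0 : ∀ r : P, G.H0at k r ≃ₗ[k] (G.delete e).H0at k r,
      ∀ {r s : P} (h : r ≤ s) (z : G.H0at k r),
        ε0 s (G.H0map k h z) = (G.delete e).H0map k h (ε0 r z)) ∧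
    (∃ ε1 : ∀ r : P, G.H1at k r ≃ₗ[k] ((G.delete e).H1at k r × indAt k G e r),
      ∀ {r s : P} (h : r ≤ s) (z : G.H1at k r),
        ε1 s (G.H1map k h z) =
          LinearMap.prodMap ((G.delete e).H1map k h) (indMap k G e h) (ε1 r z)) := by
  classical
  obtain ⟨c, hc⟩ := FGrph.conn_mem_range k (G.delete e) (G.fE e) he (G.mono0 e) (G.mono1 e)
  constructor
  · -- H0
    refine ⟨fun r => Submodule.quotEquivOfEq _ _ (G.rangeEq k e c hc r), ?_⟩
    intro r s h z
    obtain ⟨x, rfl⟩ := Submodule.Quotient.mk_surjective _ z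
    show Submodule.quotEquivOfEq _ _ (G.rangeEq k e c hc s) (G.H0map k h (Submodule.Quotient.mk x)) = _
    rfl
  · -- H1
    have hker1 : ∀ (r : P) (x : ↥(LinearMap.ker (G.dr k r))),
        ((G.piE k e r + (G.gamE k e c r).comp (G.jE k e r)).comp
          (LinearMap.ker (G.dr k r)).subtype) x ∈ LinearMap.ker ((G.delete e).dr k r) := by
      intro r x
      rw [LinearMap.comp_apply, LinearMap.add_apply, LinearMap.comp_apply,
        Submodule.subtype_apply, LinearMap.mem_ker, G.d_fwd k e c hc r]
      exact x.2
    have hker2 : ∀ (r : P) (y : (↥(LinearMap.ker ((G.delete e).dr k r)) × indAt k G e r)),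
        (LinearMap.coprod
          ((G.iotaE k e r).comp (LinearMap.ker ((G.delete e).dr k r)).subtype)
          (G.sigmaE k e r - (G.iotaE k e r).comp (G.gamE k e c r))) y
          ∈ LinearMap.ker (G.dr k r) := by
      intro r y
      rw [LinearMap.coprod_apply, LinearMap.comp_apply, LinearMap.sub_apply,
        LinearMap.comp_apply, Submodule.subtype_apply, LinearMap.mem_ker, map_add, map_sub,
        G.d_iota k e r, G.d_iota k e r, ← G.d_sigma k e c hc r, sub_self]
      have hy := y.1.2
      rw [LinearMap.mem_ker] at hy
      exact (add_zero _).trans hy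
    refine ⟨fun r => LinearEquiv.ofLinear
      (LinearMap.prod
        (LinearMap.codRestrict _ _ (hker1 r))
        ((G.jE k e r).comp (LinearMap.ker (G.dr k r)).subtype))
      (LinearMap.codRestrict _ _ (hker2 r)) ?_ ?_, ?_⟩
    · -- F ∘ B = id
      apply LinearMap.ext
      intro y
      apply Prod.ext
      · apply Subtype.ext
        simp only [LinearMap.comp_apply, LinearMap.prod_apply, Function.prod,
          LinearMap.codRestrict_apply, LinearMap.coprod_apply, LinearMap.add_apply,
          LinearMap.sub_apply, Submodule.subtype_apply, LinearMap.id_apply,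
          map_add, map_sub, map_zero, G.pi_iota k e, G.pi_sigma k e, G.j_iota k e,
          G.j_sigma k e]
        abel
      · simp only [LinearMap.comp_apply, LinearMap.prod_apply, Function.prod,
          LinearMap.codRestrict_apply, LinearMap.coprod_apply, LinearMap.add_apply,
          LinearMap.sub_apply, Submodule.subtype_apply, LinearMap.id_apply,
          map_add, map_sub, map_zero, G.pi_iota k e, G.pi_sigma k e, G.j_iota k e,
          G.j_sigma k e]
        abel
    · -- B ∘ F = id
      apply LinearMap.ext
      intro x
      apply Subtype.ext
      simp only [LinearMap.comp_apply, LinearMap.prod_apply, Function.prod,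
        LinearMap.codRestrict_apply, LinearMap.coprod_apply, LinearMap.add_apply,
        LinearMap.sub_apply, Submodule.subtype_apply, LinearMap.id_apply,
        map_add, map_sub]
      have hd := G.decompE k e r x.1
      have h2 : G.iotaE k e r (G.piE k e r x.1) +
            G.iotaE k e r (G.gamE k e c r (G.jE k e r x.1)) +
            (G.sigmaE k e r (G.jE k e r x.1) -
              G.iotaE k e r (G.gamE k e c r (G.jE k e r x.1)))
          = G.iotaE k e r (G.piE k e r x.1) + G.sigmaE k e r (G.jE k e r x.1) := by abel
      rw [h2]
      exact hd
    · -- naturality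
      intro r s h z
      apply Prod.ext
      · apply Subtype.ext
        simp only [LinearEquiv.ofLinear_apply, LinearMap.prodMap_apply, LinearMap.prod_apply,
          Function.prod, LinearMap.codRestrict_apply, LinearMap.comp_apply, Submodule.subtype_apply,
          LinearMap.add_apply, FGrph.H1map, LinearMap.restrict_coe_apply]
        rw [G.nat_pi k e h, G.nat_j k e h, G.nat_gam k e c h]
        exact (map_add _ _ _).symm
      · simp only [LinearEquiv.ofLinear_apply, LinearMap.prodMap_apply, LinearMap.prod_apply,
          Function.prod, LinearMap.codRestrict_apply, LinearMap.comp_apply, Submodule.subtype_apply,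
          LinearMap.add_apply, FGrph.H1map, LinearMap.restrict_coe_apply]
        exact G.nat_j k e h z.1
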